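/- Let Y be a Banach space, (ε_n) a null sequence in [0,1), and (y_n*) a sequence in Y* such that ‖∑ α_n y_n*‖ ≤ sup_n (1+ε_n)|α_n| for all (α_n) ∈ c₀ and ‖y_n*‖ → 1. Let (N_n) be a sequence of pairwise disjoint infinite subsets of ℕ and define x_n* = ∑_{k ∈ N_n} y_k*/(1+ε_k) (the series converging in the weak* topology). Then ‖x_n*‖ = 1 for every n. -/

import Mathlib

open Filter Topology NormedSpace

lemma key_bound {Y : Type*} [NormedAddCommGroup Y] [NormedSpace ℝ Y]
    (ε : ℕ → ℝ) (hε : ∀ n, ε n ∈ Set.Ico (0 : ℝ) 1)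
    (ystar : ℕ → StrongDual ℝ Y)
    (hupper : ∀ (s : Finset ℕ) (α : ℕ → ℝ),
      ‖∑ n ∈ s, α n • ystar n‖ ≤ ⨆ n ∈ s, (1 + ε n) * |α n|)
    (M : Set ℕ) (σ : ℕ → ℝ) (hσ : ∀ j, |σ j| = 1) (y : Y)
    (hsum : Summable (fun k : M => ystar k.1 y / (1 + ε k.1))) :
    |∑' k : M, σ k.1 * (ystar k.1 y / (1 + ε k.1))| ≤ ‖y‖ := by
  have hpos : ∀ j, (0:ℝ) < 1 + ε j := fun j => by have := (hε j).1; linarith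
  have hg : Summable (fun k : M => σ k.1 * (ystar k.1 y / (1 + ε k.1))) := by
    rw [← summable_abs_iff]
    simpa [abs_mul, hσ] using hsum.abs
  -- partial sum bound
  have hps : ∀ s : Finset M, |∑ k ∈ s, σ k.1 * (ystar k.1 y / (1 + ε k.1))| ≤ ‖y‖ := by
    intro s
    set t : Finset ℕ := s.image Subtype.val with ht
    have hinj : Set.InjOn Subtype.val (s : Set M) := Subtype.val_injective.injOn
    have h1 : ∑ k ∈ s, σ k.1 * (ystar k.1 y / (1 + ε k.1))
        = ∑ j ∈ t, σ j * (ystar j y / (1 + ε j)) := by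
      rw [ht, Finset.sum_image (fun a _ b _ h => Subtype.val_injective h)]
    have h2 : ∑ j ∈ t, σ j * (ystar j y / (1 + ε j))
        = (∑ j ∈ t, (σ j / (1 + ε j)) • ystar j) y := by
      rw [ContinuousLinearMap.sum_apply]
      refine Finset.sum_congr rfl fun j _ => ?_
      rw [ContinuousLinearMap.smul_apply, smul_eq_mul]
      field_simp
    have h3 : ‖∑ j ∈ t, (σ j / (1 + ε j)) • ystar j‖ ≤ 1 := by
      refine (hupper t (fun j => σ j / (1 + ε j))).trans ?_
      refine Real.iSup_le (fun j => Real.iSup_le (fun hj => ?_) zero_le_one) zero_le_one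
      rw [abs_div, hσ, abs_of_pos (hpos j)]
      rw [mul_one_div, div_self (ne_of_gt (hpos j))]
    calc |∑ k ∈ s, σ k.1 * (ystar k.1 y / (1 + ε k.1))|
        = ‖(∑ j ∈ t, (σ j / (1 + ε j)) • ystar j) y‖ := by rw [h1, h2, Real.norm_eq_abs]
      _ ≤ ‖∑ j ∈ t, (σ j / (1 + ε j)) • ystar j‖ * ‖y‖ :=
          ContinuousLinearMap.le_opNorm _ _
      _ ≤ 1 * ‖y‖ := by
          exact mul_le_mul_of_nonneg_right h3 (norm_nonneg y)
      _ = ‖y‖ := one_mul _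
  have := hg.hasSum
  refine le_of_tendsto ((continuous_abs.tendsto _).comp this) ?_
  exact Filter.Eventually.of_forall hps

theorem stmt0 {Y : Type*} [NormedAddCommGroup Y] [NormedSpace ℝ Y] [CompleteSpace Y]
    (ε : ℕ → ℝ) (hε : ∀ n, ε n ∈ Set.Ico (0 : ℝ) 1) (hεlim : Tendsto ε atTop (𝓝 0))
    (ystar : ℕ → StrongDual ℝ Y)
    (hupper : ∀ (s : Finset ℕ) (α : ℕ → ℝ),
      ‖∑ n ∈ s, α n • ystar n‖ ≤ ⨆ n ∈ s, (1 + ε n) * |α n|)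
    (hnorm : Tendsto (fun n => ‖ystar n‖) atTop (𝓝 1))
    (N : ℕ → Set ℕ) (hNinf : ∀ n, (N n).Infinite)
    (hNdisj : Pairwise fun i j => Disjoint (N i) (N j))
    (xstar : ℕ → StrongDual ℝ Y)
    (hx : ∀ (n : ℕ) (y : Y),
      HasSum (fun k : N n => ystar k.1 y / (1 + ε k.1)) (xstar n y)) :
    ∀ n, ‖xstar n‖ = 1 := by
  intro n
  have hpos : ∀ j, (0:ℝ) < 1 + ε j := fun j => by have := (hε j).1; linarith
  -- upper bound
  have hub : ‖xstar n‖ ≤ 1 := by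
    refine ContinuousLinearMap.opNorm_le_bound _ zero_le_one fun y => ?_
    rw [one_mul, Real.norm_eq_abs]
    have h := key_bound ε hε ystar hupper (N n) (fun _ => 1) (fun _ => abs_one) y
      (hx n y).summable
    simpa [(hx n y).tsum_eq] using h
  -- lower bound: for each k0 ∈ N n
  have hlb' : ∀ k0 ∈ N n, 2 * ‖ystar k0‖ / (1 + ε k0) - 1 ≤ ‖xstar n‖ := by
    intro k0 hk0
    have hD : ∀ y : Y, |2 * ((ystar k0) y / (1 + ε k0)) - xstar n y| ≤ ‖y‖ := by
      intro y
      set f : N n → ℝ := fun k => ystar k.1 y / (1 + ε k.1) with hf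
      have hsum := (hx n y).summable
      set σ : ℕ → ℝ := fun j => if j = k0 then 1 else -1 with hσdef
      have hσ : ∀ j, |σ j| = 1 := by
        intro j; simp only [hσdef]; split <;> simp
      have h := key_bound ε hε ystar hupper (N n) σ hσ y hsum
      set a : N n := ⟨k0, hk0⟩ with ha
      have hval : ∀ k : N n, σ k.1 * f k = (if k = a then 2 * f a else 0) - f k := by
        intro k
        by_cases hk : k = a
        · subst hk; simp [hσdef, ha]; ring
        · have : k.1 ≠ k0 := fun h' => hk (Subtype.ext h')
          simp [hσdef, this, hk]
      have hsum2 : Summable (fun k : N n => if k = a then 2 * f a else 0) :=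
        (hasSum_ite_eq a (2 * f a)).summable
      have htsum : ∑' k : N n, σ k.1 * f k = 2 * f a - xstar n y := by
        calc ∑' k : N n, σ k.1 * f k
            = ∑' k : N n, ((if k = a then 2 * f a else 0) - f k) := by
              exact tsum_congr hval
          _ = (∑' k : N n, (if k = a then 2 * f a else 0)) - ∑' k : N n, f k :=
              Summable.tsum_sub hsum2 hsum
          _ = 2 * f a - xstar n y := by
              rw [tsum_ite_eq, (hx n y).tsum_eq]
      rw [htsum] at h
      simpa [hf, ha] using h
    have habs : ∀ y : Y, |ystar k0 y| ≤ (‖xstar n‖ + 1) * (1 + ε k0) / 2 * ‖y‖ := by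
      intro y
      have h1 := hD y
      have h2 : |xstar n y| ≤ ‖xstar n‖ * ‖y‖ := (xstar n).le_opNorm y
      set q : ℝ := ystar k0 y / (1 + ε k0) with hq
      have h6 : |2 * q| ≤ |2 * q - xstar n y| + |xstar n y| := by
        calc |2 * q| = |(2 * q - xstar n y) + xstar n y| := by ring_nf
          _ ≤ _ := abs_add_le _ _
      have h7 : |q| ≤ (‖xstar n‖ + 1) / 2 * ‖y‖ := by
        rw [abs_mul, abs_two] at h6; linarith
      have h8 : ystar k0 y = q * (1 + ε k0) := by
        rw [hq, div_mul_cancel₀ _ (ne_of_gt (hpos k0))]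
      rw [h8, abs_mul, abs_of_pos (hpos k0)]
      nlinarith [abs_nonneg q, norm_nonneg (xstar n), norm_nonneg y, hpos k0]
    have hfun : ‖ystar k0‖ ≤ (‖xstar n‖ + 1) * (1 + ε k0) / 2 := by
      refine ContinuousLinearMap.opNorm_le_bound _ ?_ fun y => ?_
      · have := norm_nonneg (xstar n); have := hpos k0; positivity
      · rw [Real.norm_eq_abs]; exact habs y
    have h5 : 0 < 1 + ε k0 := hpos k0
    rw [sub_le_iff_le_add, div_le_iff₀ h5]
    nlinarith
  -- conclude via frequently
  have hfreq : ∃ᶠ k in atTop, k ∈ N n := by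
    rw [← Nat.cofinite_eq_atTop]
    exact frequently_cofinite_mem_iff_infinite.mpr (hNinf n)
  have htend : Tendsto (fun k => 2 * ‖ystar k‖ / (1 + ε k) - 1) atTop (𝓝 1) := by
    have h1 : Tendsto (fun k => (1:ℝ) + ε k) atTop (𝓝 1) := by
      simpa using (tendsto_const_nhds.add hεlim)
    have h2 : Tendsto (fun k => 2 * ‖ystar k‖) atTop (𝓝 2) := by
      simpa using hnorm.const_mul 2
    have h3 := (h2.div h1 (one_ne_zero : (1:ℝ) ≠ 0)).sub_const 1
    norm_num at h3
    exact h3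
  have hfreq2 : ∃ᶠ k in atTop, 2 * ‖ystar k‖ / (1 + ε k) - 1 ≤ ‖xstar n‖ :=
    hfreq.mono fun k hk => hlb' k hk
  have h1le : (1:ℝ) ≤ ‖xstar n‖ := by
    have := htend.frequently (p := fun x => x ≤ ‖xstar n‖) hfreq2
    have hcl : (1:ℝ) ∈ closure {x : ℝ | x ≤ ‖xstar n‖} :=
      mem_closure_iff_frequently.mpr this
    exact isClosed_Iic.closure_subset hcl
  linarith
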